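/- Let N, M ≥ 1 and τ > 0. Let f(Q,p) = Σ_{n=1}^N Σ_{m=1}^M p_n Q_{nm} log(Q_{nm} / Σ_{l=1}^N p_l Q_{lm}), viewed as a real-valued function of (Q,p) ∈ ℝ^{N×M} × ℝ^N on the open set where all Q_{nm} > 0 and all Σ_{l=1}^N p_l Q_{lm} > 0. Then f is differentiable on this open set, and the gradient mapping (Q,p) ↦ (∇_Q f(Q,p), ∇_p f(Q,p)), restricted to the set D_τ = {(Q,p) : Q row-stochastic with Q_{nm} ≥ τ for all n,m, and p ∈ Δ_N}, is Lipschitz continuous: there exists L ≥ 0 such that ‖(∇_Q f(Q,p), ∇_p f(Q,p)) − (∇_Q f(Q',p'), ∇_p f(Q',p'))‖ ≤ L‖(Q,p)−(Q',p')‖ for all (Q,p), (Q',p') ∈ D_τ, where ‖·‖ is the Euclidean norm. -/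

import Mathlib

open Real

theorem gradient_of_AMI_lipschitz_on_positive_channels
    {N M : ℕ} (hN : 0 < N) (hM : 0 < M) (τ : ℝ) (hτ : 0 < τ)
    (f : (Fin N → Fin M → ℝ) × (Fin N → ℝ) → ℝ)
    (hf : f = fun z => ∑ n, ∑ m,
      z.2 n * z.1 n m * Real.log (z.1 n m / ∑ l, z.2 l * z.1 l m))
    (U : Set ((Fin N → Fin M → ℝ) × (Fin N → ℝ)))
    (hU : U = { z | (∀ n m, 0 < z.1 n m) ∧ ∀ m, 0 < ∑ l, z.2 l * z.1 l m })
    (D : Set ((Fin N → Fin M → ℝ) × (Fin N → ℝ)))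
    (hD : D = { z | (∀ n m, τ ≤ z.1 n m) ∧ (∀ n, ∑ m, z.1 n m = 1) ∧
      z.2 ∈ stdSimplex ℝ (Fin N) }) :
    DifferentiableOn ℝ f U ∧
      ∃ L : ℝ, 0 ≤ L ∧ ∀ z ∈ D, ∀ z' ∈ D,
        ‖fderiv ℝ f z - fderiv ℝ f z'‖ ≤ L * ‖z - z'‖ := by
  -- continuity helpers
  have hc1 : ∀ (n : Fin N) (m : Fin M),
      Continuous (fun z : (Fin N → Fin M → ℝ) × (Fin N → ℝ) => z.1 n m) := by
    intro n m; fun_prop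
  have hc2 : ∀ (n : Fin N),
      Continuous (fun z : (Fin N → Fin M → ℝ) × (Fin N → ℝ) => z.2 n) := by
    intro n; fun_prop
  -- U is open
  have hUopen : IsOpen U := by
    rw [hU]
    have : { z : (Fin N → Fin M → ℝ) × (Fin N → ℝ) |
        (∀ n m, 0 < z.1 n m) ∧ ∀ m, 0 < ∑ l, z.2 l * z.1 l m }
      = (⋂ n, ⋂ m, {z | 0 < z.1 n m}) ∩ (⋂ m, {z | 0 < ∑ l, z.2 l * z.1 l m}) := by
      ext z; simp [Set.mem_iInter]
    rw [this]
    refine IsOpen.inter ?_ ?_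
    · exact isOpen_iInter_of_finite fun n => isOpen_iInter_of_finite fun m =>
        isOpen_lt continuous_const (hc1 n m)
    · exact isOpen_iInter_of_finite fun m => isOpen_lt continuous_const (by fun_prop)
  -- smoothness pieces
  have hcd1 : ∀ (n : Fin N) (m : Fin M),
      ContDiff ℝ 2 (fun z : (Fin N → Fin M → ℝ) × (Fin N → ℝ) => z.1 n m) := by
    intro n m
    exact (contDiff_apply_apply ℝ ℝ n m).comp contDiff_fst
  have hcd2 : ∀ (n : Fin N),
      ContDiff ℝ 2 (fun z : (Fin N → Fin M → ℝ) × (Fin N → ℝ) => z.2 n) := by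
    intro n
    exact (contDiff_apply ℝ ℝ n).comp contDiff_snd
  have hcdS : ∀ (m : Fin M),
      ContDiff ℝ 2 (fun z : (Fin N → Fin M → ℝ) × (Fin N → ℝ) => ∑ l, z.2 l * z.1 l m) := by
    intro m
    exact ContDiff.sum fun l _ => (hcd2 l).mul (hcd1 l m)
  -- f is C² on U
  have hfC : ContDiffOn ℝ 2 f U := by
    intro z hz
    apply ContDiffAt.contDiffWithinAt
    rw [hU] at hz
    obtain ⟨hQ, hS⟩ := hz
    rw [hf]
    apply ContDiffAt.sum; intro n _
    apply ContDiffAt.sum; intro m _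
    refine ContDiffAt.mul ((hcd2 n).contDiffAt.mul (hcd1 n m).contDiffAt) ?_
    refine ContDiffAt.log ?_ ?_
    · exact (hcd1 n m).contDiffAt.div (hcdS m).contDiffAt (ne_of_gt (hS m))
    · exact ne_of_gt (div_pos (hQ n m) (hS m))
  have hdiff : DifferentiableOn ℝ f U := hfC.differentiableOn (by norm_num)
  refine ⟨hdiff, ?_⟩
  -- D ⊆ U
  have hDU : D ⊆ U := by
    intro z hz
    rw [hD] at hz; rw [hU]
    obtain ⟨hQ, hrow, hp⟩ := hz
    refine ⟨fun n m => lt_of_lt_of_le hτ (hQ n m), fun m => ?_⟩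
    have h1 : ∑ l, z.2 l * τ ≤ ∑ l, z.2 l * z.1 l m :=
      Finset.sum_le_sum fun l _ => mul_le_mul_of_nonneg_left (hQ l m) (hp.1 l)
    have h2 : ∑ l, z.2 l * τ = τ := by
      rw [← Finset.sum_mul, hp.2, one_mul]
    linarith
  -- D is closed
  have hDclosed : IsClosed D := by
    rw [hD]
    have : { z : (Fin N → Fin M → ℝ) × (Fin N → ℝ) | (∀ n m, τ ≤ z.1 n m) ∧
        (∀ n, ∑ m, z.1 n m = 1) ∧ z.2 ∈ stdSimplex ℝ (Fin N) }
      = (⋂ n, ⋂ m, {z : (Fin N → Fin M → ℝ) × (Fin N → ℝ) | τ ≤ z.1 n m}) ∩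
        ((⋂ n, {z : (Fin N → Fin M → ℝ) × (Fin N → ℝ) | ∑ m, z.1 n m = 1}) ∩
        (Prod.snd ⁻¹' stdSimplex ℝ (Fin N))) := by
      ext z; simp [Set.mem_iInter, and_assoc]
    rw [this]
    refine IsClosed.inter ?_ (IsClosed.inter ?_ ?_)
    · exact isClosed_iInter fun n => isClosed_iInter fun m =>
        isClosed_le continuous_const (hc1 n m)
    · exact isClosed_iInter fun n => isClosed_eq (by fun_prop) continuous_const
    · exact (isClosed_stdSimplex ℝ (Fin N)).preimage continuous_snd
  -- D is compact
  have hDcompact : IsCompact D := by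
    have hK : IsCompact ((Set.pi Set.univ fun _ : Fin N => Set.pi Set.univ
        fun _ : Fin M => Set.Icc τ 1) ×ˢ stdSimplex ℝ (Fin N)) :=
      (isCompact_univ_pi fun _ => isCompact_univ_pi fun _ => isCompact_Icc).prod
        (isCompact_stdSimplex ℝ _)
    refine hK.of_isClosed_subset hDclosed ?_
    intro z hz
    rw [hD] at hz
    obtain ⟨hQ, hrow, hp⟩ := hz
    refine ⟨Set.mem_univ_pi.2 fun n => Set.mem_univ_pi.2 fun m => ⟨hQ n m, ?_⟩, hp⟩
    calc z.1 n m ≤ ∑ m', z.1 n m' :=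
          Finset.single_le_sum (fun m' _ => le_trans hτ.le (hQ n m')) (Finset.mem_univ m)
      _ = 1 := hrow n
  -- D is convex
  have hDconvex : Convex ℝ D := by
    rw [hD]
    intro z hz w hw a b ha hb hab
    obtain ⟨hQz, hrz, hpz⟩ := hz
    obtain ⟨hQw, hrw, hpw⟩ := hw
    refine ⟨fun n m => ?_, fun n => ?_, ?_⟩
    · have : a * τ + b * τ ≤ a * z.1 n m + b * w.1 n m := by
        have := mul_le_mul_of_nonneg_left (hQz n m) ha
        have := mul_le_mul_of_nonneg_left (hQw n m) hb
        linarith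
      calc τ = a * τ + b * τ := by rw [← add_mul, hab, one_mul]
        _ ≤ a * z.1 n m + b * w.1 n m := this
        _ = (a • z + b • w).1 n m := by simp [Prod.add_def, Prod.smul_def]
    · have : (∑ m, (a • z + b • w).1 n m) = a * (∑ m, z.1 n m) + b * (∑ m, w.1 n m) := by
        simp [Finset.mul_sum, Finset.sum_add_distrib, Prod.add_def, Prod.smul_def]
      rw [this, hrz n, hrw n]; linarith
    · have := (convex_stdSimplex ℝ (Fin N)) hpz hpw ha hb hab
      simpa [Prod.add_def, Prod.smul_def] using this
  -- the derivative g := fderiv ℝ f is C¹ on U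
  have hg : ContDiffOn ℝ 1 (fderiv ℝ f) U :=
    hfC.fderiv_of_isOpen hUopen (by norm_num)
  -- g is differentiable at points of D, with continuous derivative on U
  have hgdiff : ∀ x ∈ D, DifferentiableAt ℝ (fderiv ℝ f) x := by
    intro x hx
    exact ((hg x (hDU hx)).contDiffAt (hUopen.mem_nhds (hDU hx))).differentiableAt one_ne_zero
  have hgderiv_cont : ContinuousOn (fderiv ℝ (fderiv ℝ f)) U :=
    hg.continuousOn_fderiv_of_isOpen hUopen le_rfl
  -- bound on D by compactness
  obtain ⟨C, hC⟩ := hDcompact.exists_bound_of_continuousOn (f := fderiv ℝ (fderiv ℝ f)) (hgderiv_cont.mono hDU)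
  have hC0 : 0 ≤ max C 0 := le_max_right _ _
  have hlip : LipschitzOnWith (max C 0).toNNReal (fderiv ℝ f) D := by
    refine hDconvex.lipschitzOnWith_of_nnnorm_fderiv_le hgdiff ?_
    intro x hx
    rw [← NNReal.coe_le_coe, coe_nnnorm, Real.coe_toNNReal _ hC0]
    exact le_trans (hC x hx) (le_max_left _ _)
  refine ⟨max C 0, hC0, fun z hz z' hz' => ?_⟩
  have := hlip.dist_le_mul z hz z' hz'
  rw [Real.coe_toNNReal _ hC0] at this
  simpa [dist_eq_norm] using this
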